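/- Let p be an odd prime such that N = (3^p + 1)/4 is prime. Define s_0 = 2 and s_{k+1} = s_k(4s_k² − 3). Then N divides s_p − 194 + (−1)^((p−1)/2)·168. -/

import Mathlib

def cubicSeq : ℕ → ℤ
  | 0 => 2
  | k + 1 => cubicSeq k * (4 * cubicSeq k ^ 2 - 3)

open Polynomial

lemma cubic_step {R : Type*} [CommRing R] (s a b : R) (h1 : s * 2 = a + b) (h2 : a * b = 1) :
    s * (4 * s ^ 2 - 3) * 2 = a ^ 3 + b ^ 3 := by
  linear_combination (4*s^2 + 2*s*(a+b) + (a+b)^2 - 3) * h1 + 3*(a+b) * h2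

lemma cubicSeq_closed {R : Type*} [CommRing R] (t : R) (ht : t ^ 2 = 3) (k : ℕ) :
    (cubicSeq k : R) * 2 = (2 + t) ^ (3 ^ k) + (2 - t) ^ (3 ^ k) := by
  induction k with
  | zero => simp [cubicSeq]; ring
  | succ k ih =>
    have hmul : (2 + t) ^ (3 ^ k) * (2 - t) ^ (3 ^ k) = 1 := by
      rw [← mul_pow]
      have h1 : (2 + t) * (2 - t) = 1 := by linear_combination -ht
      rw [h1, one_pow]
    have hc : (cubicSeq (k+1) : R) = (cubicSeq k : R) * (4 * (cubicSeq k : R) ^ 2 - 3) := by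
      push_cast [cubicSeq]; ring
    rw [pow_succ 3 k, pow_mul, pow_mul, hc]
    exact cubic_step _ _ _ ih hmul

theorem base_three_wagstaff_test (p : ℕ) (hp : p.Prime) (hodd : Odd p)
    (hN : Nat.Prime ((3 ^ p + 1) / 4)) :
    (((3 ^ p + 1) / 4 : ℕ) : ℤ) ∣
      cubicSeq p - 194 + (-1) ^ ((p - 1) / 2) * 168 := by
  have hp2 : p ≠ 2 := by rintro rfl; exact (by decide : ¬ Odd 2) hodd
  have hp3 : 3 ≤ p := by have := hp.two_le; omega
  -- 3^p ≡ 3 mod 4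
  have hmod4 : 3 ^ p % 4 = 3 := by
    obtain ⟨m, rfl⟩ := hodd
    have h9 : (9 : ℕ) ^ m % 4 = 1 := by rw [Nat.pow_mod]; norm_num
    have : (3:ℕ) ^ (2 * m + 1) = 9 ^ m * 3 := by
      rw [pow_succ, pow_mul]; norm_num
    rw [this, Nat.mul_mod, h9]
  set N : ℕ := (3 ^ p + 1) / 4 with hNdef
  have h4N : 4 * N = 3 ^ p + 1 := by omega
  have h27 : 27 ≤ 3 ^ p := by
    calc (27:ℕ) = 3 ^ 3 := by norm_num
    _ ≤ 3 ^ p := Nat.pow_le_pow_right (by norm_num) hp3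
  have hN7 : 7 ≤ N := by omega
  haveI factN : Fact (Nat.Prime N) := ⟨hN⟩
  have hNodd : N % 2 = 1 := Nat.Prime.eq_two_or_odd hN |>.resolve_left (by omega)
  have hN3mod : N % 3 = 1 := by
    have h3dvd : (3:ℕ) ∣ 3 ^ p := dvd_pow_self 3 (by omega)
    obtain ⟨c, hc⟩ := h3dvd
    omega
  -- Legendre symbol of 3 mod N
  have hleg : legendreSym N 3 = (-1) ^ (N / 2) := by
    haveI : Fact (Nat.Prime 3) := ⟨by norm_num⟩
    have h31 : legendreSym 3 (N : ℤ) = 1 := by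
      rw [legendreSym.mod, show ((N : ℤ) % (3:ℕ)) = 1 by push_cast; omega,
        legendreSym.at_one]
    have h := legendreSym.quadratic_reciprocity (p := 3) (q := N) (by norm_num)
        (by omega) (by omega)
    rw [h31, mul_one] at h
    simpa using h
  have heuler : (3 : ZMod N) ^ (N / 2) = (((-1:ℤ) ^ (N / 2) : ℤ) : ZMod N) := by
    have h := legendreSym.eq_pow N 3
    rw [hleg] at h
    simpa using h.symm
  -- the quadratic ring
  let f : Polynomial (ZMod N) := X ^ 2 - C 3
  have hdeg : f.degree ≠ 0 := by
    rw [show f = X ^ 2 - C 3 from rfl, Polynomial.degree_X_pow_sub_C (by norm_num)]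
    norm_num
  haveI : Nontrivial (AdjoinRoot f) := AdjoinRoot.nontrivial f hdeg
  haveI : CharP (AdjoinRoot f) N :=
    charP_of_injective_algebraMap (algebraMap (ZMod N) (AdjoinRoot f)).injective N
  set R := AdjoinRoot f with hRdef
  set t : R := AdjoinRoot.root f with htdef
  have ht : t ^ 2 = 3 := by
    have h := AdjoinRoot.mk_self (f := f)
    rw [show f = X ^ 2 - C 3 from rfl] at h
    simp only [map_sub, map_pow, AdjoinRoot.mk_X, AdjoinRoot.mk_C, sub_eq_zero] at h
    rw [← htdef] at h
    exact h.trans (map_ofNat _ 3)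
  have hunit : (2 + t) * (2 - t) = 1 := by linear_combination -ht
  -- Frobenius
  have h2R : (2 : R) = algebraMap (ZMod N) R 2 := (map_ofNat (algebraMap (ZMod N) R) 2).symm
  have h3R : (3 : R) = algebraMap (ZMod N) R 3 := (map_ofNat (algebraMap (ZMod N) R) 3).symm
  have h2N : (2 : R) ^ N = 2 := by
    rw [h2R, ← map_pow, ZMod.pow_card]
  have htN : t ^ N = (3 : R) ^ (N / 2) * t := by
    obtain ⟨m, hm⟩ : ∃ m, N = 2 * m + 1 := ⟨N / 2, by omega⟩
    have hm2 : N / 2 = m := by omega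
    have hpowN : t ^ N = t ^ (2 * m + 1) := congrArg (fun n => t ^ n) hm
    rw [hm2, hpowN, pow_succ, pow_mul, ht]
  have hplus : (2 + t) ^ N = 2 + (3 : R) ^ (N / 2) * t := by
    rw [add_pow_char, h2N, htN]
  have hminus : (2 - t) ^ N = 2 - (3 : R) ^ (N / 2) * t := by
    have : (2 - t) = 2 + (-t) := by ring
    rw [this, add_pow_char, h2N, Odd.neg_pow (hN.odd_of_ne_two (by omega)), htN]
    ring
  -- key closed form
  have hclosed := cubicSeq_closed t ht p
  -- injectivity transfer
  have hinj : Function.Injective (algebraMap (ZMod N) R) := (algebraMap (ZMod N) R).injective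
  -- parity case split
  rcases Nat.even_or_odd ((p - 1) / 2) with he | he
  · -- p ≡ 1 mod 4, N ≡ 1 mod 4
    have hp4 : p % 4 = 1 := by
      obtain ⟨m, hm⟩ := he
      obtain ⟨k, hk⟩ := hodd
      omega
    have h3p16 : 3 ^ p % 16 = 3 := by
      obtain ⟨a, ha⟩ : ∃ a, p = 4 * a + 1 := ⟨p / 4, by omega⟩
      have h81 : (81 : ℕ) ^ a % 16 = 1 := by rw [Nat.pow_mod]; norm_num
      have : (3:ℕ) ^ p = 81 ^ a * 3 := by
        rw [ha, pow_succ, pow_mul]; norm_num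
      rw [this, Nat.mul_mod, h81]
    have hN2even : (N / 2) % 2 = 0 := by omega
    have hchi : (3 : R) ^ (N / 2) = 1 := by
      rw [h3R, ← map_pow, heuler]
      rw [(Nat.even_iff.mpr hN2even).neg_one_pow]
      simp
    rw [hchi, one_mul] at hplus hminus
    have hωN : (2 + t) ^ N = 2 + t := hplus
    have h4pow : (2 + t) ^ (3 ^ p) * (2 + t) = (2 + t) ^ 4 := by
      rw [← pow_succ, show 3 ^ p + 1 = N * 4 by omega, pow_mul, hωN]
    have hω3 : (2 + t) ^ (3 ^ p) = (2 + t) ^ 3 := by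
      calc (2 + t) ^ (3 ^ p) = (2 + t) ^ (3 ^ p) * ((2 + t) * (2 - t)) := by
            rw [hunit, mul_one]
        _ = ((2 + t) ^ (3 ^ p) * (2 + t)) * (2 - t) := by ring
        _ = (2 + t) ^ 4 * (2 - t) := by rw [h4pow]
        _ = (2 + t) ^ 3 * ((2 + t) * (2 - t)) := by ring
        _ = (2 + t) ^ 3 := by rw [hunit, mul_one]
    have h4pow' : (2 - t) ^ (3 ^ p) * (2 - t) = (2 - t) ^ 4 := by
      rw [← pow_succ, show 3 ^ p + 1 = N * 4 by omega, pow_mul, hminus]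
    have hω3' : (2 - t) ^ (3 ^ p) = (2 - t) ^ 3 := by
      calc (2 - t) ^ (3 ^ p) = (2 - t) ^ (3 ^ p) * ((2 + t) * (2 - t)) := by
            rw [hunit, mul_one]
        _ = ((2 - t) ^ (3 ^ p) * (2 - t)) * (2 + t) := by ring
        _ = (2 - t) ^ 4 * (2 + t) := by rw [h4pow']
        _ = (2 - t) ^ 3 * ((2 + t) * (2 - t)) := by ring
        _ = (2 - t) ^ 3 := by rw [hunit, mul_one]
    have hsum : (cubicSeq p : R) * 2 = 52 := by
      rw [hclosed, hω3, hω3']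
      linear_combination 12 * ht
    have hzm : ((cubicSeq p - 26 : ℤ) : ZMod N) * 2 = 0 := by
      apply hinj
      rw [map_mul, map_zero, map_intCast, map_ofNat]
      push_cast
      linear_combination hsum
    have h2ne : (2 : ZMod N) ≠ 0 := by
      intro h
      have : ((2:ℕ) : ZMod N) = 0 := by exact_mod_cast h
      have := (ZMod.natCast_eq_zero_iff 2 N).mp this
      have := Nat.le_of_dvd (by norm_num) this
      omega
    have hz : ((cubicSeq p - 26 : ℤ) : ZMod N) = 0 :=
      (mul_eq_zero.mp hzm).resolve_right h2ne
    have hdvd := (ZMod.intCast_zmod_eq_zero_iff_dvd _ N).mp hz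
    rw [he.neg_one_pow]
    have : cubicSeq p - 194 + 1 * 168 = cubicSeq p - 26 := by ring
    rw [this]
    exact hdvd
  · -- p ≡ 3 mod 4, N ≡ 3 mod 4
    have hp4 : p % 4 = 3 := by
      obtain ⟨m, hm⟩ := he
      obtain ⟨k, hk⟩ := hodd
      omega
    have h3p16 : 3 ^ p % 16 = 11 := by
      obtain ⟨a, ha⟩ : ∃ a, p = 4 * a + 3 := ⟨p / 4, by omega⟩
      have h81 : (81 : ℕ) ^ a % 16 = 1 := by rw [Nat.pow_mod]; norm_num
      have : (3:ℕ) ^ p = 81 ^ a * 27 := by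
        rw [ha, pow_add, pow_mul]; norm_num
      rw [this, Nat.mul_mod, h81]
    have hN2odd : (N / 2) % 2 = 1 := by omega
    have hchi : (3 : R) ^ (N / 2) = -1 := by
      rw [h3R, ← map_pow, heuler]
      rw [(Nat.odd_iff.mpr hN2odd).neg_one_pow]
      simp
    rw [hchi] at hplus hminus
    have hωN : (2 + t) ^ N = 2 - t := by rw [hplus]; ring
    have hωN' : (2 - t) ^ N = 2 + t := by rw [hminus]; ring
    have h4pow : (2 + t) ^ (3 ^ p) * (2 + t) = (2 - t) ^ 4 := by
      rw [← pow_succ, show 3 ^ p + 1 = N * 4 by omega, pow_mul, hωN]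
    have hω5 : (2 + t) ^ (3 ^ p) = (2 - t) ^ 5 := by
      calc (2 + t) ^ (3 ^ p) = (2 + t) ^ (3 ^ p) * ((2 + t) * (2 - t)) := by
            rw [hunit, mul_one]
        _ = ((2 + t) ^ (3 ^ p) * (2 + t)) * (2 - t) := by ring
        _ = (2 - t) ^ 4 * (2 - t) := by rw [h4pow]
        _ = (2 - t) ^ 5 := by ring
    have h4pow' : (2 - t) ^ (3 ^ p) * (2 - t) = (2 + t) ^ 4 := by
      rw [← pow_succ, show 3 ^ p + 1 = N * 4 by omega, pow_mul, hωN']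
    have hω5' : (2 - t) ^ (3 ^ p) = (2 + t) ^ 5 := by
      calc (2 - t) ^ (3 ^ p) = (2 - t) ^ (3 ^ p) * ((2 + t) * (2 - t)) := by
            rw [hunit, mul_one]
        _ = ((2 - t) ^ (3 ^ p) * (2 - t)) * (2 + t) := by ring
        _ = (2 + t) ^ 4 * (2 + t) := by rw [h4pow']
        _ = (2 + t) ^ 5 := by ring
    have hsum : (cubicSeq p : R) * 2 = 724 := by
      rw [hclosed, hω5, hω5']
      linear_combination (20 * t ^ 2 + 220) * ht
    have hzm : ((cubicSeq p - 362 : ℤ) : ZMod N) * 2 = 0 := by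
      apply hinj
      rw [map_mul, map_zero, map_intCast, map_ofNat]
      push_cast
      linear_combination hsum
    have h2ne : (2 : ZMod N) ≠ 0 := by
      intro h
      have : ((2:ℕ) : ZMod N) = 0 := by exact_mod_cast h
      have := (ZMod.natCast_eq_zero_iff 2 N).mp this
      have := Nat.le_of_dvd (by norm_num) this
      omega
    have hz : ((cubicSeq p - 362 : ℤ) : ZMod N) = 0 :=
      (mul_eq_zero.mp hzm).resolve_right h2ne
    have hdvd := (ZMod.intCast_zmod_eq_zero_iff_dvd _ N).mp hz
    rw [he.neg_one_pow]
    have : cubicSeq p - 194 + (-1) * 168 = cubicSeq p - 362 := by ring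
    rw [this]
    exact hdvd
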